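/- Let π be a Rogers-Ramanujan partition with exactly s successive lower-Durfee squares. Then π is a partition with exactly s successive Durfee squares; moreover, the lower-Durfee squares coincide with the Durfee squares. -/

import Mathlib

/-- The side of the Durfee square of a partition whose parts are listed in
weakly decreasing order `L`: the number of indices `i` with `L[i] ≥ i+1`. -/
def durfee (L : List ℕ) : ℕ :=
  ((Finset.range L.length).filter fun i => i + 1 ≤ L.getD i 0).card

theorem durfee_le (L : List ℕ) : durfee L ≤ L.length := by
  classical
  calc ((Finset.range L.length).filter fun i => i + 1 ≤ L.getD i 0).card
      ≤ (Finset.range L.length).card := Finset.card_filter_le _ _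
    _ = L.length := Finset.card_range _

/-- The sides of the successive Durfee squares (from the top) of a partition
whose parts are listed in weakly decreasing order. -/
def durfeeSides (L : List ℕ) : List ℕ :=
  if h : durfee L = 0 then [] else durfee L :: durfeeSides (L.drop (durfee L))
  termination_by L.length
  decreasing_by
    have h1 := durfee_le L
    simp only [List.length_drop]
    omega

/-- The sides of the successive lower-Durfee squares (from the bottom) of a
partition whose parts are listed in weakly *increasing* order `M`: the first
lower-Durfee square has side `min M.head M.length`, and one recurses on the
remaining (larger) parts. -/
def lowerSides (M : List ℕ) : List ℕ :=
  if h : min (M.headD 0) M.length = 0 then []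
  else min (M.headD 0) M.length :: lowerSides (M.drop (min (M.headD 0) M.length))
  termination_by M.length
  decreasing_by
    simp only [List.length_drop]
    omega

/-! ### Auxiliary lemmas -/

lemma getD_drop' (M : List ℕ) (k i : ℕ) : (M.drop k).getD i 0 = M.getD (k + i) 0 := by
  by_cases h : i < (M.drop k).length
  · rw [List.getD_eq_getElem _ _ h, List.getElem_drop,
      List.getD_eq_getElem _ _ (by simp at h ⊢; omega)]
  · rw [List.getD_eq_default _ _ (by omega), List.getD_eq_default _ _ (by simp at h ⊢; omega)]

lemma getD_take' (M : List ℕ) (k i : ℕ) (h : i < k) :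
    (M.take k).getD i 0 = M.getD i 0 := by
  by_cases h2 : i < M.length
  · rw [List.getD_eq_getElem _ _ (by simp; omega), List.getElem_take,
      List.getD_eq_getElem _ _ h2]
  · rw [List.getD_eq_default _ _ (by simp; omega), List.getD_eq_default _ _ (by omega)]

lemma getD_reverse' (M : List ℕ) (i : ℕ) (h : i < M.length) :
    M.reverse.getD i 0 = M.getD (M.length - 1 - i) 0 := by
  rw [List.getD_eq_getElem _ _ (by simpa using h), List.getElem_reverse,
    List.getD_eq_getElem _ _ (by omega)]

lemma sorted_getD_le {M : List ℕ} (hs : M.Pairwise (· ≤ ·)) {i j : ℕ}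
    (hij : i ≤ j) (hj : j < M.length) : M.getD i 0 ≤ M.getD j 0 := by
  have hi : i < M.length := lt_of_le_of_lt hij hj
  rw [List.getD_eq_getElem _ _ hi, List.getD_eq_getElem _ _ hj]
  exact hs.rel_get_of_le (a := ⟨i, hi⟩) (b := ⟨j, hj⟩) hij

lemma headD_eq_getD {M : List ℕ} (h : M ≠ []) : M.headD 0 = M.getD 0 0 := by
  cases M with
  | nil => simp at h
  | cons a l => simp

lemma one_le_headD {M : List ℕ} (hpos : ∀ x ∈ M, 1 ≤ x) (h : M ≠ []) :
    1 ≤ M.headD 0 := by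
  cases M with
  | nil => simp at h
  | cons a l => exact hpos a (by simp)

lemma getLastD_ne_nil {l : List ℕ} (h : l ≠ []) (a : ℕ) :
    l.getLastD a = l.getLast h := by
  rw [List.getLastD_eq_getLast?, List.getLast?_eq_getLast h]; rfl

lemma lowerSides_nil : lowerSides [] = [] := by rw [lowerSides]; simp

lemma lowerSides_cons {M : List ℕ} (hpos : ∀ x ∈ M, 1 ≤ x) (hM : M ≠ []) :
    lowerSides M = min (M.headD 0) M.length ::
      lowerSides (M.drop (min (M.headD 0) M.length)) := by
  have h1 := one_le_headD hpos hM
  have h2 : 1 ≤ M.length := List.length_pos_iff.mpr hM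
  rw [lowerSides, dif_neg (by omega)]

lemma lowerSides_eq_nil_iff {M : List ℕ} (hpos : ∀ x ∈ M, 1 ≤ x) :
    lowerSides M = [] ↔ M = [] := by
  constructor
  · intro h
    by_contra hM
    rw [lowerSides_cons hpos hM] at h
    simp at h
  · rintro rfl; exact lowerSides_nil

lemma sum_lowerSides (M : List ℕ) (hpos : ∀ x ∈ M, 1 ≤ x) :
    (lowerSides M).sum = M.length := by
  by_cases hM : M = []
  · subst hM; simp [lowerSides_nil]
  · have h1 := one_le_headD hpos hM
    have h2 : 1 ≤ M.length := List.length_pos_iff.mpr hM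
    rw [lowerSides_cons hpos hM, List.sum_cons,
      sum_lowerSides (M.drop (min (M.headD 0) M.length))
        (fun x hx => hpos x (List.mem_of_mem_drop hx))]
    simp only [List.length_drop]
    omega
  termination_by M.length
  decreasing_by simp only [List.length_drop]; omega

lemma key (M : List ℕ) (hsort : M.Pairwise (· ≤ ·)) (hpos : ∀ x ∈ M, 1 ≤ x)
    (hM : M ≠ []) :
    1 ≤ (lowerSides M).getLastD 0 ∧ (lowerSides M).getLastD 0 ≤ M.length ∧
    (lowerSides M).getLastD 0 ≤ M.getD (M.length - (lowerSides M).getLastD 0) 0 ∧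
    lowerSides (M.take (M.length - (lowerSides M).getLastD 0)) = (lowerSides M).dropLast ∧
    ((lowerSides M).dropLast ≠ [] →
      M.getD (M.length - (lowerSides M).getLastD 0 -
          ((lowerSides M).dropLast).getLastD 0) 0
        = ((lowerSides M).dropLast).getLastD 0) := by
  have hL : 1 ≤ M.length := List.length_pos_iff.mpr hM
  have hh : 1 ≤ M.headD 0 := one_le_headD hpos hM
  have hcons := lowerSides_cons hpos hM
  by_cases hA : M.length ≤ M.headD 0
  -- Case A: single lower-Durfee square of side M.length
  · have hmin : min (M.headD 0) M.length = M.length := by omega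
    have htl : lowerSides (M.drop M.length) = [] := by
      rw [List.drop_length]; exact lowerSides_nil
    have ht : lowerSides M = [M.length] := by rw [hcons, hmin, htl]
    rw [ht]
    refine ⟨hL, le_refl _, ?_, ?_, ?_⟩
    · simp only [List.getLastD_cons, List.getLastD_nil, Nat.sub_self]
      rw [← headD_eq_getD hM]; omega
    · simp
      exact lowerSides_nil
    · simp
  -- Case B
  · push_neg at hA
    have hmin : min (M.headD 0) M.length = M.headD 0 := by omega
    set h := M.headD 0 with hh'
    set M₂ := M.drop h with hM₂
    have hlen₂ : M₂.length = M.length - h := by simp [hM₂]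
    have hM₂ne : M₂ ≠ [] := by
      intro hc
      rw [hc] at hlen₂; simp at hlen₂; omega
    have hpos₂ : ∀ x ∈ M₂, 1 ≤ x := fun x hx => hpos x (List.mem_of_mem_drop hx)
    have hsort₂ : M₂.Pairwise (· ≤ ·) := hsort.sublist (List.drop_sublist _ _)
    have IH := key M₂ hsort₂ hpos₂ hM₂ne
    obtain ⟨ih1, ih2, ih3, ih4, ih5⟩ := IH
    set t₂ := lowerSides M₂ with ht₂
    have ht₂ne : t₂ ≠ [] := by rw [ht₂, Ne, lowerSides_eq_nil_iff hpos₂]; exact hM₂ne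
    have ht : lowerSides M = h :: t₂ := by rw [hcons, hmin]
    set d := t₂.getLastD 0 with hd
    have hlast : (lowerSides M).getLastD 0 = d := by
      rw [ht, List.getLastD_cons, getLastD_ne_nil ht₂ne h, ← getLastD_ne_nil ht₂ne 0]
    have hdrop : (lowerSides M).dropLast = h :: t₂.dropLast := by
      rw [ht, List.dropLast_cons_of_ne_nil ht₂ne]
    -- d ≤ |M₂|
    have hsum₂ : t₂.sum = M₂.length := sum_lowerSides M₂ hpos₂
    have hdle : d ≤ M₂.length := by
      rw [← hsum₂, hd, getLastD_ne_nil ht₂ne 0]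
      exact List.single_le_sum (fun x _ => Nat.zero_le x) _ (List.getLast_mem ht₂ne)
    have harith : h ≤ M.length - d := by omega
    rw [hlast, hdrop]
    refine ⟨ih1, by omega, ?_, ?_, ?_⟩
    -- (ii)
    · have hgd : M₂.getD (M₂.length - d) 0 = M.getD (h + (M₂.length - d)) 0 := by
        rw [hM₂]; exact getD_drop' _ _ _
      have he : h + (M₂.length - d) = M.length - d := by omega
      rw [hgd, he] at ih3; exact ih3
    -- (iii)
    · set M' := M.take (M.length - d) with hM'
      have hlen' : M'.length = M.length - d := by
        rw [hM', List.length_take]; omega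
      have hM'ne : M' ≠ [] := by
        intro hc; rw [hc] at hlen'; simp at hlen'; omega
      have hhead' : M'.headD 0 = h := by
        rw [headD_eq_getD hM'ne, hM', getD_take' _ _ _ (by omega), hh', headD_eq_getD hM]
      have hmin' : min (M'.headD 0) M'.length = h := by
        rw [hhead', hlen']; omega
      rw [lowerSides_cons (fun x hx => hpos x (List.mem_of_mem_take (hM' ▸ hx))) hM'ne,
        hmin']
      congr 1
      have : M'.drop h = M₂.take (M₂.length - d) := by
        rw [hM', List.drop_take, hlen₂, ← hM₂]
        congr 1; omega
      rw [this, ih4]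
    -- (iv)
    · intro _
      by_cases hc : t₂.dropLast = []
      · have ht₂s : t₂ = [d] := by
          conv_lhs => rw [← List.dropLast_append_getLast ht₂ne]
          rw [hc, ← getLastD_ne_nil ht₂ne 0, ← hd]; rfl
        have hsum : d = M₂.length := by rw [← hsum₂, ht₂s]; simp
        rw [hc]
        simp only [List.getLastD_cons, List.getLastD_nil]
        have : M.length - d - h = 0 := by omega
        rw [this, ← headD_eq_getD hM]
      · have hd' : (h :: t₂.dropLast).getLastD 0 = (t₂.dropLast).getLastD 0 := by
          rw [List.getLastD_cons, getLastD_ne_nil hc h, ← getLastD_ne_nil hc 0]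
        rw [hd']
        set d' := (t₂.dropLast).getLastD 0 with hd'def
        have ihv := ih5 hc
        -- d' ≤ sum of dropLast t₂ = |M₂| - d
        have hsplit : t₂.dropLast.sum + d = M₂.length := by
          rw [← hsum₂]
          conv_rhs => rw [← List.dropLast_append_getLast ht₂ne]
          rw [List.sum_append, ← getLastD_ne_nil ht₂ne 0, ← hd]
          simp
        have hd'le : d' ≤ t₂.dropLast.sum := by
          rw [hd'def, getLastD_ne_nil hc 0]
          exact List.single_le_sum (fun x _ => Nat.zero_le x) _ (List.getLast_mem hc)
        have hgd : M₂.getD (M₂.length - d - d') 0 = M.getD (h + (M₂.length - d - d')) 0 := by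
          rw [hM₂]; exact getD_drop' _ _ _
        have he : h + (M₂.length - d - d') = M.length - d - d' := by omega
        rw [hgd, he] at ihv
        exact ihv
  termination_by M.length
  decreasing_by simp only [hM₂, List.length_drop]; omega

lemma durfeeSides_nil : durfeeSides [] = [] := by
  rw [durfeeSides]; simp [durfee]

lemma main_aux (M : List ℕ) (hsort : M.Pairwise (· ≤ ·)) (hpos : ∀ x ∈ M, 1 ≤ x)
    (hRR : ∀ x ∈ M.take (M.length - (lowerSides M).getLastD 0),
      x ≤ (lowerSides M).getLastD 0) :
    durfeeSides M.reverse = (lowerSides M).reverse := by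
  by_cases hM : M = []
  · subst hM; simp [lowerSides_nil, durfeeSides_nil]
  · have hL : 1 ≤ M.length := List.length_pos_iff.mpr hM
    obtain ⟨hd1, hdL, hdget, htake, hiv⟩ := key M hsort hpos hM
    set t := lowerSides M with ht
    set d := t.getLastD 0 with hd
    have htne : t ≠ [] := by rw [ht, Ne, lowerSides_eq_nil_iff hpos]; exact hM
    -- Step 1 : durfee M.reverse = d
    have hdur : durfee M.reverse = d := by
      have hfil : (Finset.range M.length).filter
          (fun i => i + 1 ≤ M.reverse.getD i 0) = Finset.range d := by
        ext i
        simp only [Finset.mem_filter, Finset.mem_range]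
        constructor
        · rintro ⟨hiL, hge⟩
          by_contra hcon
          push_neg at hcon
          have hdlt : d < M.length := by omega
          rw [getD_reverse' _ _ hiL] at hge
          have hidx : M.length - 1 - i < M.length - d := by omega
          have hmem : M.getD (M.length - 1 - i) 0 ∈ M.take (M.length - d) := by
            rw [← getD_take' _ _ _ hidx]
            have hlt : M.length - 1 - i < (M.take (M.length - d)).length := by
              rw [List.length_take]; omega
            rw [List.getD_eq_getElem _ _ hlt]
            exact List.getElem_mem hlt
          have := hRR _ hmem
          omega
        · intro hid
          have hiL : i < M.length := by omega
          refine ⟨hiL, ?_⟩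
          rw [getD_reverse' _ _ hiL]
          have hge : M.getD (M.length - d) 0 ≤ M.getD (M.length - 1 - i) 0 :=
            sorted_getD_le hsort (by omega) (by omega)
          omega
      rw [durfee, List.length_reverse, hfil, Finset.card_range]
    -- Step 2 : unfold durfeeSides
    rw [durfeeSides, dif_neg (by omega : ¬ durfee M.reverse = 0), hdur]
    have hdrop : M.reverse.drop d = (M.take (M.length - d)).reverse := by
      rw [List.reverse_take]
      congr 1; omega
    rw [hdrop]
    -- Step 3 : recursive call on M' = M.take (M.length - d)
    set M' := M.take (M.length - d) with hM'
    have hlen' : M'.length = M.length - d := by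
      rw [hM', List.length_take]; omega
    have hsort' : M'.Pairwise (· ≤ ·) := hsort.sublist (List.take_sublist _ _)
    have hpos' : ∀ x ∈ M', 1 ≤ x := fun x hx => hpos x (List.mem_of_mem_take (hM' ▸ hx))
    have hls' : lowerSides M' = t.dropLast := htake
    have hRR' : ∀ x ∈ M'.take (M'.length - (lowerSides M').getLastD 0),
        x ≤ (lowerSides M').getLastD 0 := by
      rw [hls']
      by_cases hc : t.dropLast = []
      · have : M' = [] := (lowerSides_eq_nil_iff hpos').mp (hls'.trans hc)
        rw [this]; simp
      · set d' := (t.dropLast).getLastD 0 with hd'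
        have ihv := hiv hc
        intro x hx
        rw [List.mem_iff_getElem] at hx
        obtain ⟨j, hj, hxe⟩ := hx
        have hjlt : j < M'.length - d' := by
          have := hj
          rw [List.length_take] at this
          omega
        have hxg : x = M.getD j 0 := by
          rw [← hxe, ← List.getD_eq_getElem _ 0 hj,
            getD_take' _ _ _ hjlt, hM',
            getD_take' _ _ _ (by omega)]
        have hjlt2 : j ≤ M.length - d - d' := by omega
        have hge : M.getD j 0 ≤ M.getD (M.length - d - d') 0 :=
          sorted_getD_le hsort (by omega) (by omega)
        rw [hxg]
        omega
    have IH := main_aux M' hsort' hpos' hRR'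
    rw [IH, hls']
    -- Step 4 : reassemble
    conv_rhs => rw [← List.dropLast_append_getLast htne]
    rw [List.reverse_append, ← getLastD_ne_nil htne 0, ← hd]
    rfl
  termination_by M.length
  decreasing_by
    simp only [hM', List.length_take]
    omega

/-- **Lemma 3.2.** Let `π` be a Rogers–Ramanujan partition with exactly `s`
successive lower-Durfee squares, i.e. a partition (with parts listed in weakly
increasing order `M`, all parts positive) having exactly `s` successive
lower-Durfee squares, all of whose parts below the `s`-th (topmost)
lower-Durfee square are at most its side `d_s`.  Then `π` has exactly `s`
successive Durfee squares; indeed, the lower-Durfee squares form the Durfee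
squares. -/
theorem rr_lower_durfee_eq_durfee (M : List ℕ) (hsort : M.Pairwise (· ≤ ·))
    (hpos : ∀ x ∈ M, 1 ≤ x) (s : ℕ) (hs : (lowerSides M).length = s)
    (hRR : ∀ x ∈ M.take (M.length - (lowerSides M).getLastD 0),
      x ≤ (lowerSides M).getLastD 0) :
    (durfeeSides M.reverse).length = s ∧
      durfeeSides M.reverse = (lowerSides M).reverse := by
  have h := main_aux M hsort hpos hRR
  refine ⟨?_, h⟩
  rw [h, List.length_reverse, hs]
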